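/- Let R = k[X, Y, Z]/(XY(X+Y)) with k = ℤ/(2), x, y, z, the images of X, Y, Z, and let R[t] be a polynomial ring over R. Then there is an R-algebra isomorphism R[t]/(xt, yt − y(x+y)z, t² − yzt) ≅ T₁, where T₁ = R + k[z]·zρ ⊆ R̄ and ρ = (ȳ, 0, 0) under the identification R̄ = R/xR × R/yR × R/(x+y)R. -/

import Mathlib

set_option synthInstance.maxHeartbeats 1000000
set_option maxHeartbeats 2000000

/-- The ideal `(XY(X+Y))` of `k[X, Y, Z]`, `k = ℤ/(2)`. -/
noncomputable def Jline : Ideal (MvPolynomial (Fin 3) (ZMod 2)) :=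
  Ideal.span {MvPolynomial.X 0 * MvPolynomial.X 1 * (MvPolynomial.X 0 + MvPolynomial.X 1)}

/-- `R = k[X, Y, Z]/(XY(X+Y))` with `k = ℤ/(2)`. -/
def Rline : Type := MvPolynomial (Fin 3) (ZMod 2) ⧸ Jline

noncomputable instance : CommRing Rline :=
  inferInstanceAs (CommRing (MvPolynomial (Fin 3) (ZMod 2) ⧸ Jline))

noncomputable instance : Algebra (ZMod 2) Rline :=
  inferInstanceAs (Algebra (ZMod 2) (MvPolynomial (Fin 3) (ZMod 2) ⧸ Jline))

/-- The image `x` of `X` in `R`. -/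
noncomputable def xR : Rline := Ideal.Quotient.mk Jline (MvPolynomial.X 0)

/-- The image `y` of `Y` in `R`. -/
noncomputable def yR : Rline := Ideal.Quotient.mk Jline (MvPolynomial.X 1)

/-- The image `z` of `Z` in `R`. -/
noncomputable def zR : Rline := Ideal.Quotient.mk Jline (MvPolynomial.X 2)

/-- `R̄ = R/xR × R/yR × R/(x+y)R`, the integral closure of `R` in `Q(R)`. -/
noncomputable abbrev Rbar3 : Type :=
  (Rline ⧸ Ideal.span {xR}) × (Rline ⧸ Ideal.span {yR}) × (Rline ⧸ Ideal.span {xR + yR})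

/-- The canonical map `R → R̄`. -/
noncomputable def RtoRbar3 : Rline →+* Rbar3 :=
  (Ideal.Quotient.mk (Ideal.span {xR})).prod
    ((Ideal.Quotient.mk (Ideal.span {yR})).prod (Ideal.Quotient.mk (Ideal.span {xR + yR})))

/-- `ρ = (ȳ, 0, 0) ∈ R̄`. -/
noncomputable def ρ3 : Rbar3 := (Ideal.Quotient.mk (Ideal.span {xR}) yR, 0, 0)

/-- The ideal `(xt, yt − y(x+y)z, t² − yzt)` of the polynomial ring `R[t]`. -/
noncomputable def I19 : Ideal (Polynomial Rline) :=
  Ideal.span {Polynomial.C xR * Polynomial.X,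
    Polynomial.C yR * Polynomial.X - Polynomial.C (yR * (xR + yR) * zR),
    Polynomial.X ^ 2 - Polynomial.C (yR * zR) * Polynomial.X}

/-! ### Auxiliary material -/

section Aux

abbrev Mv3 := MvPolynomial (Fin 3) (ZMod 2)

lemma prime_X0 : Prime (MvPolynomial.X 0 : Mv3) := by
  have h : Prime (MvPolynomial.finSuccEquiv (ZMod 2) 2 (MvPolynomial.X 0)) := by
    rw [MvPolynomial.finSuccEquiv_X_zero]; exact Polynomial.prime_X
  exact (MulEquiv.prime_iff (MvPolynomial.finSuccEquiv (ZMod 2) 2)).mp h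

lemma prime_X01 : Prime (MvPolynomial.X 0 + MvPolynomial.X 1 : Mv3) := by
  have h : Prime (MvPolynomial.finSuccEquiv (ZMod 2) 2 (MvPolynomial.X 0 + MvPolynomial.X 1)) := by
    have h1 : (MvPolynomial.X 1 : Mv3) = MvPolynomial.X (Fin.succ 0) := by
      rw [Fin.succ_zero_eq_one]
    rw [map_add, MvPolynomial.finSuccEquiv_X_zero, h1, MvPolynomial.finSuccEquiv_X_succ]
    have : (Polynomial.X + Polynomial.C (MvPolynomial.X 0 : MvPolynomial (Fin 2) (ZMod 2)))
        = Polynomial.X - Polynomial.C (-(MvPolynomial.X 0)) := by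
      rw [map_neg, sub_neg_eq_add]
    rw [this]; exact Polynomial.prime_X_sub_C _
  exact (MulEquiv.prime_iff (MvPolynomial.finSuccEquiv (ZMod 2) 2)).mp h

lemma not_dvd_aux (a b : Mv3) (v : Fin 3 → ZMod 2) (ha : MvPolynomial.eval v a = 0)
    (hb : MvPolynomial.eval v b = 1) : ¬ a ∣ b := by
  rintro ⟨c, rfl⟩
  rw [map_mul, ha, zero_mul] at hb
  exact zero_ne_one hb

lemma ndvd1 : ¬ (MvPolynomial.X 0 : Mv3) ∣ MvPolynomial.X 1 :=
  not_dvd_aux _ _ ![0,1,0] (by simp) (by simp)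

lemma ndvd2 : ¬ (MvPolynomial.X 0 : Mv3) ∣ (MvPolynomial.X 0 + MvPolynomial.X 1) :=
  not_dvd_aux _ _ ![0,1,0] (by simp) (by simp)

lemma ndvd3 : ¬ (MvPolynomial.X 0 + MvPolynomial.X 1 : Mv3) ∣ MvPolynomial.X 1 :=
  not_dvd_aux _ _ ![1,1,0] (by simp; decide) (by simp)

/-- Evaluation `X₀ ↦ 0, X₁ ↦ 0, X₂ ↦ t`. -/
noncomputable def epsM : Mv3 →ₐ[ZMod 2] Polynomial (ZMod 2) :=
  MvPolynomial.aeval (fun i => if i = 2 then Polynomial.X else 0)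

lemma decompM (P : Mv3) :
    ∃ (A B : Mv3) (w : Polynomial (ZMod 2)),
      P = MvPolynomial.X 0 * A + MvPolynomial.X 1 * B + Polynomial.aeval (MvPolynomial.X 2) w := by
  induction P using MvPolynomial.induction_on with
  | C c => exact ⟨0, 0, Polynomial.C c, by simp⟩
  | add p q hp hq =>
    obtain ⟨A, B, w, rfl⟩ := hp
    obtain ⟨A', B', w', rfl⟩ := hq
    exact ⟨A + A', B + B', w + w', by rw [map_add]; ring⟩
  | mul_X p i hp =>
    obtain ⟨A, B, w, rfl⟩ := hp
    fin_cases i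
    · exact ⟨MvPolynomial.X 0 * A + MvPolynomial.X 1 * B + Polynomial.aeval (MvPolynomial.X 2) w,
        0, 0, by simp only [Fin.zero_eta]; rw [map_zero]; ring⟩
    · exact ⟨0, MvPolynomial.X 0 * A + MvPolynomial.X 1 * B + Polynomial.aeval (MvPolynomial.X 2) w,
        0, by simp only [Fin.mk_one]; rw [map_zero]; ring⟩
    · exact ⟨A * MvPolynomial.X 2, B * MvPolynomial.X 2, w * Polynomial.X, by
        simp only [show (⟨2, by norm_num⟩ : Fin 3) = 2 from rfl]
        rw [map_mul, Polynomial.aeval_X]; ring⟩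

lemma keyM (P : Mv3) (g : Polynomial (ZMod 2))
    (h1 : MvPolynomial.X 1 ∣ P) (h2 : (MvPolynomial.X 0 + MvPolynomial.X 1) ∣ P)
    (h3 : MvPolynomial.X 0 ∣ P + Polynomial.aeval (MvPolynomial.X 2) g * MvPolynomial.X 2 * MvPolynomial.X 1) :
    g = 0 ∧ (MvPolynomial.X 0 * MvPolynomial.X 1 * (MvPolynomial.X 0 + MvPolynomial.X 1)) ∣ P := by
  obtain ⟨A, rfl⟩ := h1
  obtain ⟨H, rfl⟩ := (prime_X01.dvd_or_dvd h2).resolve_left ndvd3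
  have h3' : MvPolynomial.X 0 ∣ MvPolynomial.X 1 *
      ((MvPolynomial.X 0 + MvPolynomial.X 1) * H + Polynomial.aeval (MvPolynomial.X 2) g * MvPolynomial.X 2) := by
    have e : MvPolynomial.X 1 * ((MvPolynomial.X 0 + MvPolynomial.X 1) * H
          + Polynomial.aeval (MvPolynomial.X 2) g * MvPolynomial.X 2)
        = MvPolynomial.X 1 * ((MvPolynomial.X 0 + MvPolynomial.X 1) * H)
          + Polynomial.aeval (MvPolynomial.X 2) g * MvPolynomial.X 2 * MvPolynomial.X 1 := by ring
    rw [e]; exact h3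
  have h4 := (prime_X0.dvd_or_dvd h3').resolve_left ndvd1
  obtain ⟨Q, hQ⟩ := h4
  have hg : g = 0 := by
    have := congrArg epsM hQ
    rw [map_add, map_mul, map_mul, map_add, map_mul] at this
    have e0 : epsM (MvPolynomial.X 0) = 0 := by simp [epsM]
    have e1 : epsM (MvPolynomial.X 1) = 0 := by simp [epsM]
    have e2 : epsM (MvPolynomial.X 2) = Polynomial.X := by simp [epsM]
    have eg : epsM (Polynomial.aeval (MvPolynomial.X 2) g) = g := by
      rw [← Polynomial.aeval_algHom_apply epsM (MvPolynomial.X 2) g, e2]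
      exact Polynomial.aeval_X_left_apply g
    rw [e0, e1, e2, eg, zero_mul] at this
    simpa using this
  subst hg
  rw [map_zero, zero_mul, add_zero] at hQ
  have h5 : MvPolynomial.X 0 ∣ (MvPolynomial.X 0 + MvPolynomial.X 1) * H := ⟨Q, hQ⟩
  obtain ⟨H', rfl⟩ := (prime_X0.dvd_or_dvd h5).resolve_left ndvd2
  exact ⟨rfl, ⟨H', by ring⟩⟩

/-- `mk` commutes with univariate `aeval`. -/
lemma mk_aeval (w : Polynomial (ZMod 2)) :
    Ideal.Quotient.mk Jline (Polynomial.aeval (MvPolynomial.X 2) w) = Polynomial.aeval zR w := by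
  rw [zR, ← Ideal.Quotient.mkₐ_eq_mk (ZMod 2) Jline]
  exact (Polynomial.aeval_algHom_apply (Ideal.Quotient.mkₐ (ZMod 2) Jline) (MvPolynomial.X 2) w).symm

lemma decompR (r : Rline) :
    ∃ (a b : Rline) (w : Polynomial (ZMod 2)),
      r = xR * a + yR * b + Polynomial.aeval zR w := by
  obtain ⟨P, rfl⟩ := Ideal.Quotient.mk_surjective r
  obtain ⟨A, B, w, rfl⟩ := decompM P
  exact ⟨Ideal.Quotient.mk Jline A, Ideal.Quotient.mk Jline B, w, by
    rw [map_add, map_add, map_mul, map_mul, mk_aeval, xR, yR]; rfl⟩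

lemma dvd_of_mk_mem (P Q : Mv3)
    (hQ : Q ∣ (MvPolynomial.X 0 * MvPolynomial.X 1 * (MvPolynomial.X 0 + MvPolynomial.X 1)))
    (h : Ideal.Quotient.mk Jline P ∈ Ideal.span {Ideal.Quotient.mk Jline Q}) : Q ∣ P := by
  rw [Ideal.mem_span_singleton'] at h
  obtain ⟨c, hc⟩ := h
  obtain ⟨C, rfl⟩ := Ideal.Quotient.mk_surjective c
  have h0 : Ideal.Quotient.mk Jline (P - C * Q) = 0 := by
    rw [map_sub, map_mul, hc, sub_self]
  rw [Ideal.Quotient.eq_zero_iff_mem, Jline, Ideal.mem_span_singleton] at h0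
  have : Q ∣ P - C * Q := dvd_trans hQ h0
  calc Q ∣ (P - C * Q) + C * Q := dvd_add this (Dvd.intro_left C rfl)
    _ = P := by ring

lemma mkq_zero (b a : Rline) (h : b ∣ a) :
    Ideal.Quotient.mk (Ideal.span {b}) a = 0 :=
  Ideal.Quotient.eq_zero_iff_mem.mpr (Ideal.mem_span_singleton.mpr h)

end Aux

/-- There is an `R`-algebra isomorphism `R[t]/(xt, yt − y(x+y)z, t² − yzt) ≅ T₁`, where
`T₁ = R + k[z]·zρ ⊆ R̄`, sending `t` to `zρ`: formally, an injective `R`-algebra map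
`ψ : R[t]/I → R̄` with `ψ(t) = zρ` whose range is `R + k[z]·zρ`. -/
theorem presentation_of_T1 :
    letI : Algebra Rline Rbar3 := RtoRbar3.toAlgebra
    ∃ ψ : (Polynomial Rline ⧸ I19) →ₐ[Rline] Rbar3,
      Function.Injective ψ ∧
      ψ (Ideal.Quotient.mk I19 Polynomial.X) = algebraMap Rline Rbar3 zR * ρ3 ∧
      Set.range ψ =
        {b : Rbar3 | ∃ (r : Rline) (p : Polynomial (ZMod 2)),
          b = algebraMap Rline Rbar3 r +
            algebraMap Rline Rbar3 (Polynomial.aeval zR p * zR) * ρ3} := by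
  letI : Algebra Rline Rbar3 := RtoRbar3.toAlgebra
  set mk1 := Ideal.Quotient.mk (Ideal.span {xR}) with hmk1
  set mk2 := Ideal.Quotient.mk (Ideal.span {yR}) with hmk2
  set mk3 := Ideal.Quotient.mk (Ideal.span {xR + yR}) with hmk3
  have halg : ∀ r : Rline, algebraMap Rline Rbar3 r = (mk1 r, mk2 r, mk3 r) := fun r => rfl
  set ζ : Rbar3 := algebraMap Rline Rbar3 zR * ρ3 with hζdef
  have hζ : ζ = (mk1 (zR * yR), 0, 0) := by
    rw [hζdef, halg, ρ3, Prod.mk_mul_mk, Prod.mk_mul_mk, ← map_mul, mul_zero, mul_zero]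
  -- the evaluation map
  set φ : Polynomial Rline →ₐ[Rline] Rbar3 := Polynomial.aeval ζ with hφdef
  have hval : ∀ r s : Rline, φ (Polynomial.C r + Polynomial.C s * Polynomial.X)
      = algebraMap Rline Rbar3 r + algebraMap Rline Rbar3 s * ζ := by
    intro r s
    rw [hφdef, map_add, map_mul, Polynomial.aeval_C, Polynomial.aeval_C, Polynomial.aeval_X]
  have hval3 : ∀ r s : Rline, φ (Polynomial.C r + Polynomial.C s * Polynomial.X)
      = (mk1 (r + s * (zR * yR)), mk2 r, mk3 r) := by
    intro r s
    rw [hval, hζ, halg, halg, Prod.mk_mul_mk, Prod.mk_mul_mk, Prod.mk_add_mk, Prod.mk_add_mk,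
      ← map_mul, ← map_add, mul_zero, mul_zero, add_zero, add_zero]
  -- the generators of I19 are in the kernel of φ
  have hgen : ∀ a ∈ I19, φ a = 0 := by
    have hle : I19 ≤ RingHom.ker φ := by
      rw [I19, Ideal.span_le]
      rintro p hp
      simp only [Set.mem_insert_iff, Set.mem_singleton_iff] at hp
      rcases hp with rfl | rfl | rfl
      · rw [SetLike.mem_coe, RingHom.mem_ker]
        have : (Polynomial.C xR * Polynomial.X : Polynomial Rline)
            = Polynomial.C 0 + Polynomial.C xR * Polynomial.X := by rw [map_zero, zero_add]
        rw [this, hval3, Prod.mk_eq_zero, Prod.mk_eq_zero]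
        refine ⟨?_, ?_, ?_⟩
        · rw [zero_add]; exact mkq_zero _ _ ⟨zR * yR, rfl⟩
        · rw [map_zero]
        · rw [map_zero]
      · rw [SetLike.mem_coe, RingHom.mem_ker]
        have : (Polynomial.C yR * Polynomial.X - Polynomial.C (yR * (xR + yR) * zR) : Polynomial Rline)
            = Polynomial.C (-(yR * (xR + yR) * zR)) + Polynomial.C yR * Polynomial.X := by
          rw [map_neg]; ring
        rw [this, hval3, Prod.mk_eq_zero, Prod.mk_eq_zero]
        refine ⟨?_, ?_, ?_⟩
        · exact mkq_zero _ _ ⟨-(yR * zR), by ring⟩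
        · exact mkq_zero _ _ ⟨-((xR + yR) * zR), by ring⟩
        · exact mkq_zero _ _ ⟨-(yR * zR), by ring⟩
      · rw [SetLike.mem_coe, RingHom.mem_ker]
        have : (Polynomial.X ^ 2 - Polynomial.C (yR * zR) * Polynomial.X : Polynomial Rline)
            = (Polynomial.C 0 + Polynomial.C 1 * Polynomial.X)
              * (Polynomial.C 0 + Polynomial.C 1 * Polynomial.X)
              - (Polynomial.C 0 + Polynomial.C (yR * zR) * Polynomial.X) := by
          rw [map_zero, map_one]; ring
        rw [this, map_sub, map_mul, hval3, hval3, Prod.mk_mul_mk, Prod.mk_mul_mk,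
          Prod.mk_sub_mk, Prod.mk_sub_mk, ← map_mul, ← map_mul, ← map_mul, ← map_sub,
          ← map_sub, ← map_sub, Prod.mk_eq_zero, Prod.mk_eq_zero]
        refine ⟨?_, ?_, ?_⟩
        · exact mkq_zero _ _ ⟨0, by ring⟩
        · exact mkq_zero _ _ ⟨0, by ring⟩
        · exact mkq_zero _ _ ⟨0, by ring⟩
    intro a ha
    exact hle ha
  set ψ : (Polynomial Rline ⧸ I19) →ₐ[Rline] Rbar3 := Ideal.Quotient.liftₐ I19 φ hgen with hψdef
  have hψmk : ∀ q : Polynomial Rline, ψ (Ideal.Quotient.mk I19 q) = φ q := fun q =>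
    Ideal.Quotient.liftₐ_apply I19 φ hgen q
  set mkI := Ideal.Quotient.mk I19 with hmkI
  -- relations in the quotient
  have rel1 : mkI (Polynomial.C xR * Polynomial.X) = 0 :=
    Ideal.Quotient.eq_zero_iff_mem.mpr (Ideal.subset_span (by simp))
  have rel2 : mkI (Polynomial.C yR * Polynomial.X) = mkI (Polynomial.C (yR * (xR + yR) * zR)) := by
    rw [Ideal.Quotient.mk_eq_mk_iff_sub_mem]
    exact Ideal.subset_span (by simp)
  have rel3 : mkI (Polynomial.X ^ 2) = mkI (Polynomial.C (yR * zR) * Polynomial.X) := by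
    rw [Ideal.Quotient.mk_eq_mk_iff_sub_mem]
    exact Ideal.subset_span (by simp)
  have rel3' : mkI (Polynomial.X ^ 2) = mkI (Polynomial.C (yR * (xR + yR) * zR ^ 2)) := by
    rw [rel3]
    have e : (Polynomial.C (yR * zR) * Polynomial.X : Polynomial Rline)
        = Polynomial.C zR * (Polynomial.C yR * Polynomial.X) := by
      rw [← mul_assoc, ← Polynomial.C_mul, mul_comm zR yR]
    rw [e, map_mul, rel2, ← map_mul, ← Polynomial.C_mul]
    congr 2
    ring
  have relR : ∀ r : Rline, ∃ (s : Rline) (h : Polynomial (ZMod 2)),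
      mkI (Polynomial.C r * Polynomial.X)
        = mkI (Polynomial.C s + Polynomial.C (Polynomial.aeval zR h) * Polynomial.X) := by
    intro r
    obtain ⟨a, b, w, rfl⟩ := decompR r
    refine ⟨yR * (xR + yR) * zR * b, w, ?_⟩
    have e : mkI (Polynomial.C (xR * a + yR * b + Polynomial.aeval zR w) * Polynomial.X)
        = mkI (Polynomial.C a) * mkI (Polynomial.C xR * Polynomial.X)
          + mkI (Polynomial.C b) * mkI (Polynomial.C yR * Polynomial.X)
          + mkI (Polynomial.C (Polynomial.aeval zR w) * Polynomial.X) := by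
      rw [← map_mul, ← map_mul, ← map_add, ← map_add]
      congr 1
      rw [map_add, map_add, map_mul, map_mul]; ring
    rw [e, rel1, mul_zero, zero_add, rel2, ← map_mul, ← map_add]
    congr 1
    rw [← Polynomial.C_mul, mul_comm b]
  -- normal form in the quotient
  have NF : ∀ A : Polynomial Rline ⧸ I19, ∃ (r : Rline) (g : Polynomial (ZMod 2)),
      A = mkI (Polynomial.C r + Polynomial.C (Polynomial.aeval zR g) * Polynomial.X) := by
    intro A
    obtain ⟨q, rfl⟩ := Ideal.Quotient.mk_surjective A
    induction q using Polynomial.induction_on with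
    | C r => exact ⟨r, 0, by rw [map_zero, map_zero, zero_mul, add_zero]⟩
    | add p q hp hq =>
      obtain ⟨r, g, hp'⟩ := hp
      obtain ⟨r', g', hq'⟩ := hq
      refine ⟨r + r', g + g', ?_⟩
      rw [map_add, hp', hq', ← map_add]
      congr 1
      rw [map_add, map_add, map_add]
      ring
    | monomial n a ih =>
      obtain ⟨r, g, hfrm⟩ := ih
      obtain ⟨s, h, hs⟩ := relR r
      have e : (Polynomial.C a * Polynomial.X ^ (n + 1) : Polynomial Rline)
          = (Polynomial.C a * Polynomial.X ^ n) * Polynomial.X := by ring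
      have step : mkI (Polynomial.C a * Polynomial.X ^ (n + 1))
          = mkI (Polynomial.C r * Polynomial.X)
            + mkI (Polynomial.C (Polynomial.aeval zR g)) * mkI (Polynomial.X ^ 2) := by
        rw [e, map_mul, hfrm, ← map_mul, ← map_mul, ← map_add]
        congr 1
        ring
      refine ⟨s + Polynomial.aeval zR g * (yR * (xR + yR) * zR ^ 2), h, ?_⟩
      rw [step, hs, rel3', ← map_mul, ← Polynomial.C_mul, ← map_add]
      congr 1
      rw [map_add (f := Polynomial.C)]
      ring
  refine ⟨ψ, ?_, ?_, ?_⟩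
  · -- injectivity
    rw [injective_iff_map_eq_zero]
    intro A hA
    obtain ⟨r, g, rfl⟩ := NF A
    rw [hψmk, hval3] at hA
    rw [Prod.ext_iff, Prod.ext_iff] at hA
    obtain ⟨h1, h2, h3⟩ := hA
    simp only at h1 h2 h3
    obtain ⟨P, hP⟩ := Ideal.Quotient.mk_surjective (I := Jline) r
    -- translate the three conditions into divisibilities
    have d1 : MvPolynomial.X 1 ∣ P := by
      refine dvd_of_mk_mem P (MvPolynomial.X 1) ⟨MvPolynomial.X 0 * (MvPolynomial.X 0 + MvPolynomial.X 1), by ring⟩ ?_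
      rw [hP]
      exact Ideal.Quotient.eq_zero_iff_mem.mp h2
    have d2 : (MvPolynomial.X 0 + MvPolynomial.X 1) ∣ P := by
      refine dvd_of_mk_mem P _ ⟨MvPolynomial.X 0 * MvPolynomial.X 1, by ring⟩ ?_
      rw [hP]
      exact Ideal.Quotient.eq_zero_iff_mem.mp h3
    have d3 : MvPolynomial.X 0 ∣ P + Polynomial.aeval (MvPolynomial.X 2) g
        * MvPolynomial.X 2 * MvPolynomial.X 1 := by
      refine dvd_of_mk_mem _ (MvPolynomial.X 0) ⟨MvPolynomial.X 1 * (MvPolynomial.X 0 + MvPolynomial.X 1), by ring⟩ ?_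
      have hmkval : Ideal.Quotient.mk Jline (P + Polynomial.aeval (MvPolynomial.X 2) g
          * MvPolynomial.X 2 * MvPolynomial.X 1) = r + Polynomial.aeval zR g * (zR * yR) := by
        rw [map_add, map_mul, map_mul, mk_aeval, hP]
        show r + Polynomial.aeval zR g * zR * yR = r + Polynomial.aeval zR g * (zR * yR)
        ring
      rw [hmkval]
      exact Ideal.Quotient.eq_zero_iff_mem.mp h1
    obtain ⟨hg0, hPJ⟩ := keyM P g d1 d2 d3
    have hr0 : r = 0 := by
      rw [← hP]; apply Ideal.Quotient.eq_zero_iff_mem.mpr; rw [Jline]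
      exact Ideal.mem_span_singleton.mpr hPJ
    rw [hr0, hg0, map_zero, map_zero, map_zero, zero_mul, add_zero, map_zero]
  · -- ψ(t) = zρ
    rw [hψmk, hφdef]
    exact Polynomial.aeval_X ζ
  · -- range
    ext b
    constructor
    · rintro ⟨A, rfl⟩
      obtain ⟨r, g, rfl⟩ := NF A
      refine ⟨r, g, ?_⟩
      rw [hψmk, hval, hζdef, map_mul, ← mul_assoc]
    · rintro ⟨r, p, hb⟩
      refine ⟨mkI (Polynomial.C r + Polynomial.C (Polynomial.aeval zR p) * Polynomial.X), ?_⟩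
      rw [hψmk, hval, hb, hζdef, map_mul, ← mul_assoc]
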